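/- Let z ∈ C¹(a,b) be a positive solution of ż = c g(u) − f(u) − h(u)/z^α on its maximal existence interval (a,b) ⊆ (0,1). Then a = 0, i.e., the solution extends to the left up to 0. -/

import Mathlib

open Set Filter Topology Real

/-- A positive solution of `ż = c g(u) − f(u) − h(u)/z^α` defined on its maximal
existence interval `(a,b) ⊆ (0,1)` satisfies `a = 0`: no positive solution on a
larger interval `(a',b)` with `a' < a` can restrict to `z`. -/
theorem stmt_5 (α c : ℝ) (hα : 0 < α) (f g h : ℝ → ℝ)
    (hf : ContinuousOn f (Icc 0 1)) (hg : ContinuousOn g (Icc 0 1))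
    (hh : ContinuousOn h (Icc 0 1))
    (hh0 : h 0 = 0) (hh1 : h 1 = 0) (hhpos : ∀ u ∈ Ioo (0:ℝ) 1, 0 < h u)
    (a b : ℝ) (ha : 0 ≤ a) (hab : a < b) (hb : b ≤ 1)
    (z : ℝ → ℝ)
    (hz : ∀ u ∈ Ioo a b, HasDerivAt z (c * g u - f u - h u / z u ^ α) u)
    (hzpos : ∀ u ∈ Ioo a b, 0 < z u)
    (hmax : ∀ a' : ℝ, 0 ≤ a' → a' < a →
      ¬ ∃ w : ℝ → ℝ,
        (∀ u ∈ Ioo a' b, HasDerivAt w (c * g u - f u - h u / w u ^ α) u ∧ 0 < w u) ∧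
        (∀ u ∈ Ioo a b, w u = z u)) :
    a = 0 := by
  by_contra ha0
  have hapos : 0 < a := lt_of_le_of_ne ha (Ne.symm ha0)
  have ha1 : a < 1 := lt_of_lt_of_le hab hb
  -- bounds for the coefficient functions
  obtain ⟨M₀, hM₀⟩ := (isCompact_Icc : IsCompact (Icc (0:ℝ) 1)).exists_bound_of_continuousOn
      ((continuousOn_const.mul hg).sub hf)
  set M := max M₀ 0 with hMdef
  have hM : ∀ u ∈ Icc (0:ℝ) 1, |c * g u - f u| ≤ M := fun u hu => (hM₀ u hu).trans (le_max_left _ _)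
  have hM0 : (0:ℝ) ≤ M := le_max_right _ _
  obtain ⟨H₀, hH₀⟩ := (isCompact_Icc : IsCompact (Icc (0:ℝ) 1)).exists_bound_of_continuousOn hh
  set Hb := max H₀ 0 with hHdef
  have hH : ∀ u ∈ Icc (0:ℝ) 1, |h u| ≤ Hb := fun u hu => (hH₀ u hu).trans (le_max_left _ _)
  have hHb0 : (0:ℝ) ≤ Hb := le_max_right _ _
  have hhnn : ∀ u ∈ Icc (0:ℝ) 1, 0 ≤ h u := by
    intro u hu
    rcases eq_or_lt_of_le hu.1 with h0 | h0
    · simp [← h0, hh0]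
    rcases eq_or_lt_of_le hu.2 with h1 | h1
    · simp [h1, hh1]
    · exact (hhpos u ⟨h0, h1⟩).le
  have ha01 : a ∈ Ioo (0:ℝ) 1 := ⟨hapos, ha1⟩
  have hconth : ContinuousAt h a := hh.continuousAt (Icc_mem_nhds ha01.1 ha01.2)
  set η := h a / 2 with hηdef
  have hη : 0 < η := half_pos (hhpos a ha01)
  have hev : ∀ᶠ t in 𝓝 a, η < h t := hconth.tendsto.eventually (eventually_gt_nhds (by
    simp only [hηdef]; linarith [hhpos a ha01]))
  obtain ⟨δ, hδ0, hδ⟩ := Metric.eventually_nhds_iff.mp hev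
  set u₁ := min ((a + b) / 2) (a + δ / 2) with hu₁def
  have hau₁ : a < u₁ := lt_min (by linarith) (by linarith)
  have hu₁b : u₁ < b := lt_of_le_of_lt (min_le_left _ _) (by linarith)
  have hu₁δ : u₁ < a + δ := lt_of_le_of_lt (min_le_right _ _) (by linarith)
  have hsub1 : Ioo a u₁ ⊆ Ioo a b := fun t ht => ⟨ht.1, lt_trans ht.2 hu₁b⟩
  have hsub01 : Ioo a b ⊆ Icc (0:ℝ) 1 := fun t ht =>
    ⟨le_of_lt (lt_of_le_of_lt ha ht.1), le_of_lt (lt_of_lt_of_le ht.2 hb)⟩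
  have hηz : ∀ t ∈ Ioc a u₁, η < h t := by
    intro t ht
    apply hδ
    rw [Real.dist_eq, abs_of_pos (by linarith [ht.1] : (0:ℝ) < t - a)]
    linarith [ht.2]
  -- the solution is bounded away from zero near `a`
  set m₀ := (η / (M + 1)) ^ α⁻¹ with hm₀def
  have hMpos : (0:ℝ) < M + 1 := by linarith
  have hm₀pos : 0 < m₀ := Real.rpow_pos_of_pos (div_pos hη hMpos) _
  have hm₀α : m₀ ^ α = η / (M + 1) := by
    rw [hm₀def, ← Real.rpow_mul (div_pos hη hMpos).le, inv_mul_cancel₀ hα.ne', Real.rpow_one]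
  have hderiv : ∀ t ∈ Ioo a b, deriv z t = c * g t - f t - h t / z t ^ α :=
    fun t ht => (hz t ht).deriv
  have hneg : ∀ t ∈ Ioo a u₁, z t < m₀ → deriv z t < 0 := by
    intro t ht hzt
    rw [hderiv t (hsub1 ht)]
    have ht01 : t ∈ Icc (0:ℝ) 1 := hsub01 (hsub1 ht)
    have h1 : c * g t - f t ≤ M := (abs_le.mp (hM t ht01)).2
    have hzt0 : 0 < z t := hzpos t (hsub1 ht)
    have hzα : 0 < z t ^ α := Real.rpow_pos_of_pos hzt0 α
    have h2 : z t ^ α < m₀ ^ α := Real.rpow_lt_rpow hzt0.le hzt hα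
    rw [hm₀α] at h2
    have e1 : η / (η / (M + 1)) < η / z t ^ α := div_lt_div_of_pos_left hη hzα h2
    have e2 : η / (η / (M + 1)) = M + 1 := by field_simp
    have e3 : η / z t ^ α ≤ h t / z t ^ α := by
      gcongr
      exact (hηz t ⟨ht.1, ht.2.le⟩).le
    linarith
  have hzcont : ContinuousOn z (Ioo a b) := fun t ht => ((hz t ht).continuousAt).continuousWithinAt
  have hu₁mem : u₁ ∈ Ioo a b := ⟨hau₁, hu₁b⟩
  set m' := min (z u₁) m₀ with hm'def
  have hm'pos : 0 < m' := lt_min (hzpos u₁ hu₁mem) hm₀pos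
  have hlow : ∀ u ∈ Ioc a u₁, m' ≤ z u := by
    rintro u ⟨hua, huu₁⟩
    rcases eq_or_lt_of_le huu₁ with rfl | huu₁
    · exact min_le_left _ _
    by_contra hlt
    push_neg at hlt
    have hIccsub : Icc u u₁ ⊆ Ioo a b := fun t ht =>
      ⟨lt_of_lt_of_le hua ht.1, lt_of_le_of_lt ht.2 hu₁b⟩
    have hcont : ContinuousOn z (Icc u u₁) := hzcont.mono hIccsub
    have hum : z u < m₀ := lt_of_lt_of_le hlt (min_le_right _ _)
    by_cases hT : (Icc u u₁ ∩ z ⁻¹' (Ici m₀)).Nonempty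
    · set T := Icc u u₁ ∩ z ⁻¹' (Ici m₀) with hTdef
      have hTcl : IsClosed T := hcont.preimage_isClosed_of_isClosed isClosed_Icc isClosed_Ici
      have hbdd : BddBelow T := ⟨u, fun v hv => hv.1.1⟩
      set v₀ := sInf T with hv₀def
      have hv₀T : v₀ ∈ T := hTcl.csInf_mem hT hbdd
      have huv₀ : u < v₀ := by
        rcases lt_or_eq_of_le hv₀T.1.1 with h' | h'
        · exact h'
        · exact absurd hv₀T.2 (by rw [← h']; exact not_le.2 hum)
      have hltm₀ : ∀ t ∈ Ico u v₀, z t < m₀ := by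
        intro t ht
        by_contra hge
        push_neg at hge
        have : t ∈ T := ⟨⟨ht.1, le_trans ht.2.le hv₀T.1.2⟩, hge⟩
        exact absurd (csInf_le hbdd this) (not_le.2 ht.2)
      have hanti : StrictAntiOn z (Icc u v₀) := by
        apply strictAntiOn_of_deriv_neg (convex_Icc _ _)
          (hcont.mono (Icc_subset_Icc_right hv₀T.1.2))
        intro t ht
        rw [interior_Icc] at ht
        exact hneg t ⟨lt_trans hua ht.1, lt_of_lt_of_le ht.2 hv₀T.1.2⟩
          (hltm₀ t ⟨ht.1.le, ht.2⟩)
      have e1 : z v₀ < z u := hanti (left_mem_Icc.2 huv₀.le) (right_mem_Icc.2 huv₀.le) huv₀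
      have e2 : m₀ ≤ z v₀ := hv₀T.2
      linarith
    · rw [not_nonempty_iff_eq_empty] at hT
      have hallm : ∀ v ∈ Icc u u₁, z v < m₀ := by
        intro v hv
        by_contra hge
        push_neg at hge
        exact absurd (show v ∈ Icc u u₁ ∩ z ⁻¹' (Ici m₀) from ⟨hv, hge⟩) (by simp [hT])
      have hanti : StrictAntiOn z (Icc u u₁) := by
        apply strictAntiOn_of_deriv_neg (convex_Icc _ _) hcont
        intro t ht
        rw [interior_Icc] at ht
        exact hneg t ⟨lt_trans hua ht.1, ht.2⟩ (hallm t ⟨ht.1.le, ht.2.le⟩)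
      have e1 : z u₁ < z u := hanti (left_mem_Icc.2 huu₁.le) (right_mem_Icc.2 huu₁.le) huu₁
      have e2 : z u < z u₁ := lt_of_lt_of_le hlt (min_le_left _ _)
      linarith
  -- the solution is Lipschitz near `a`, hence has a limit `L` at `a⁺`
  set K := M + Hb / m' ^ α with hKdef
  have hm'α : 0 < m' ^ α := Real.rpow_pos_of_pos hm'pos α
  have hK0 : 0 ≤ K := by positivity
  have hbound : ∀ t ∈ Ioo a u₁, |deriv z t| ≤ K := by
    intro t ht
    have htm : t ∈ Ioo a b := hsub1 ht
    have ht01 : t ∈ Icc (0:ℝ) 1 := hsub01 htm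
    rw [hderiv t htm]
    have h1 := abs_le.mp (hM t ht01)
    have hzα : 0 < z t ^ α := Real.rpow_pos_of_pos (hzpos t htm) α
    have hq0 : 0 ≤ h t / z t ^ α := div_nonneg (hhnn t ht01) hzα.le
    have hq1 : h t / z t ^ α ≤ Hb / m' ^ α :=
      div_le_div₀ hHb0 (le_trans (le_abs_self _) (hH t ht01)) hm'α
        (Real.rpow_le_rpow hm'pos.le (hlow t ⟨ht.1, ht.2.le⟩) hα.le)
    rw [abs_le]
    constructor <;> linarith [h1.1, h1.2]
  have hlip : LipschitzOnWith K.toNNReal z (Ioo a u₁) := by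
    apply (convex_Ioo a u₁).lipschitzOnWith_of_nnnorm_hasDerivWithin_le
      (f' := deriv z)
      (fun t ht => ((hz t (hsub1 ht)).differentiableAt.hasDerivAt).hasDerivWithinAt)
    intro t ht
    rw [← NNReal.coe_le_coe, coe_nnnorm, Real.norm_eq_abs, Real.coe_toNNReal _ hK0]
    exact hbound t ht
  obtain ⟨Z, hZlip, hZeq⟩ := hlip.extend_real
  set L := Z a with hLdef
  have htendz : Tendsto z (𝓝[>] a) (𝓝 L) := by
    rw [← nhdsWithin_Ioo_eq_nhdsGT hau₁]
    exact tendsto_nhdsWithin_congr (fun t ht => (hZeq ht).symm)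
      ((hZlip.continuous.tendsto a).mono_left nhdsWithin_le_nhds)
  have hL : m' ≤ L := by
    apply ge_of_tendsto htendz
    filter_upwards [Ioc_mem_nhdsGT_of_mem ⟨le_refl a, hau₁⟩] with t ht using hlow t ht
  have hLpos : 0 < L := lt_of_lt_of_le hm'pos hL
  set d := c * g a - f a - h a / L ^ α with hddef
  have htendd : Tendsto (deriv z) (𝓝[>] a) (𝓝 d) := by
    have hIccnhds : Icc (0:ℝ) 1 ∈ 𝓝 a := Icc_mem_nhds hapos ha1
    have h1 : Tendsto (fun u => z u ^ α) (𝓝[>] a) (𝓝 (L ^ α)) :=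
      (Real.continuousAt_rpow_const L α (Or.inl hLpos.ne')).tendsto.comp htendz
    have hg' : Tendsto g (𝓝[>] a) (𝓝 (g a)) :=
      ((hg.continuousAt hIccnhds).tendsto).mono_left nhdsWithin_le_nhds
    have hf' : Tendsto f (𝓝[>] a) (𝓝 (f a)) :=
      ((hf.continuousAt hIccnhds).tendsto).mono_left nhdsWithin_le_nhds
    have hh' : Tendsto h (𝓝[>] a) (𝓝 (h a)) :=
      ((hh.continuousAt hIccnhds).tendsto).mono_left nhdsWithin_le_nhds
    have h2 : Tendsto (fun u => c * g u - f u - h u / z u ^ α) (𝓝[>] a) (𝓝 d) :=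
      ((tendsto_const_nhds.mul hg').sub hf').sub
        (hh'.div h1 (Real.rpow_pos_of_pos hLpos α).ne')
    apply h2.congr'
    filter_upwards [Ioo_mem_nhdsGT_of_mem ⟨le_refl a, hau₁⟩] with t ht
      using (hderiv t (hsub1 ht)).symm
  -- set up the Picard–Lindelöf theorem on a small interval to the left of `a`
  set R := L / 2 with hRdef
  have hR : 0 < R := by positivity
  have hRα : 0 < R ^ α := Real.rpow_pos_of_pos hR α
  set Cb := M + Hb / R ^ α with hCbdef
  have hCb0 : 0 ≤ Cb := by positivity
  set Cp := Cb + 1 with hCpdef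
  have hCp : 0 < Cp := by positivity
  set ε := min (a / 2) (R / Cp) with hεdef
  have hε0 : 0 < ε := lt_min (by linarith) (by positivity)
  set tmin := a - ε with htmindef
  have htminlt : tmin < a := by simp only [htmindef]; linarith
  have htminpos : 0 < tmin := by
    have : ε ≤ a / 2 := min_le_left _ _
    simp only [htmindef]; linarith
  have hIcc01 : Icc tmin a ⊆ Icc (0:ℝ) 1 := fun t ht =>
    ⟨le_trans htminpos.le ht.1, le_trans ht.2 ha1.le⟩
  have hballpos : ∀ y ∈ Metric.closedBall L R, R ≤ y := by
    intro y hy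
    rw [Metric.mem_closedBall, Real.dist_eq, abs_le] at hy
    have := hy.1
    simp only [hRdef] at *
    linarith
  set Lip := α * Hb * R ^ (-1 - α) with hLipdef
  have hLip0 : 0 ≤ Lip := by positivity
  have hlipF : ∀ t ∈ Icc tmin a,
      LipschitzOnWith Lip.toNNReal (fun y => c * g t - f t - h t / y ^ α)
        (Metric.closedBall L R) := by
    intro t ht
    have ht01 : t ∈ Icc (0:ℝ) 1 := hIcc01 ht
    have hht0 : 0 ≤ h t := hhnn t ht01
    simp only [div_eq_mul_inv]
    apply (convex_closedBall L R).lipschitzOnWith_of_nnnorm_hasDerivWithin_le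
      (f' := fun y => h t * α * (y ^ (α - 1) / (y ^ α) ^ 2))
    · intro y hy
      have hy0 : 0 < y := lt_of_lt_of_le hR (hballpos y hy)
      have hyα : 0 < y ^ α := Real.rpow_pos_of_pos hy0 α
      have h1 : HasDerivAt (fun y : ℝ => y ^ α) (α * y ^ (α - 1)) y :=
        Real.hasDerivAt_rpow_const (Or.inl hy0.ne')
      have h3 := ((h1.inv hyα.ne').const_mul (h t)).const_sub (c * g t - f t)
      have h4 : HasDerivAt (fun y : ℝ => c * g t - f t - h t * (y ^ α)⁻¹)
          (h t * α * (y ^ (α - 1) / (y ^ α) ^ 2)) y := by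
        exact h3.congr_deriv (by ring)
      exact h4.hasDerivWithinAt
    · intro y hy
      have hyR : R ≤ y := hballpos y hy
      have hy0 : 0 < y := lt_of_lt_of_le hR hyR
      have hyα : 0 < y ^ α := Real.rpow_pos_of_pos hy0 α
      rw [← NNReal.coe_le_coe, coe_nnnorm, Real.norm_eq_abs, Real.coe_toNNReal _ hLip0]
      have hsimp : y ^ (α - 1) / (y ^ α) ^ 2 = y ^ (-1 - α) := by
        rw [sq, ← div_div, ← Real.rpow_sub hy0, ← Real.rpow_sub hy0]
        congr 1
        ring
      have habs : |h t * α * (y ^ (α - 1) / (y ^ α) ^ 2)|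
          = h t * α * (y ^ (α - 1) / (y ^ α) ^ 2) := by
        apply abs_of_nonneg
        apply mul_nonneg (mul_nonneg hht0 hα.le)
        positivity
      rw [habs, hsimp]
      have hmono : y ^ (-1 - α) ≤ R ^ (-1 - α) :=
        Real.rpow_le_rpow_of_nonpos hR hyR (by linarith)
      have hht : h t ≤ Hb := le_trans (le_abs_self _) (hH t ht01)
      calc h t * α * y ^ (-1 - α) ≤ Hb * α * R ^ (-1 - α) := by
            apply mul_le_mul (mul_le_mul hht le_rfl hα.le hHb0) hmono
              (Real.rpow_pos_of_pos hy0 _).le (by positivity)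
        _ = Lip := by rw [hLipdef]; ring
  have hpl : IsPicardLindelof (fun t y => c * g t - f t - h t / y ^ α)
      (tmin := tmin) (tmax := a) ⟨a, htminlt.le, le_refl a⟩ L R.toNNReal 0 Cp.toNNReal Lip.toNNReal :=
    { lipschitzOnWith := by
        intro t ht
        rw [Real.coe_toNNReal _ hR.le]
        exact hlipF t ht
      continuousOn := by
        intro y _
        exact ((continuousOn_const.mul (hg.mono hIcc01)).sub (hf.mono hIcc01)).sub
          ((hh.mono hIcc01).div_const _)
      norm_le := by
        intro t ht y hy
        rw [Real.coe_toNNReal _ hR.le] at hy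
        rw [Real.coe_toNNReal _ hCp.le]
        have ht01 : t ∈ Icc (0:ℝ) 1 := hIcc01 ht
        have hyR : R ≤ y := hballpos y hy
        have hy0 : 0 < y := lt_of_lt_of_le hR hyR
        have hyα : 0 < y ^ α := Real.rpow_pos_of_pos hy0 α
        have h1 := abs_le.mp (hM t ht01)
        have hq0 : 0 ≤ h t / y ^ α := div_nonneg (hhnn t ht01) hyα.le
        have hq1 : h t / y ^ α ≤ Hb / R ^ α :=
          div_le_div₀ hHb0 (le_trans (le_abs_self _) (hH t ht01)) hRα
            (Real.rpow_le_rpow hR.le hyR hα.le)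
        rw [Real.norm_eq_abs, abs_le]
        constructor <;> simp only [hCpdef, hCbdef] <;> linarith [h1.1, h1.2]
      mul_max_le := by
        simp only [sub_zero, NNReal.coe_zero, Real.coe_toNNReal _ hR.le,
          Real.coe_toNNReal _ hCp.le]
        have hmax0 : max (a - a) (a - tmin) = ε := by
          simp only [htmindef, sub_self, sub_sub_cancel]
          exact max_eq_right hε0.le
        rw [hmax0]
        have : ε ≤ R / Cp := min_le_right _ _
        calc Cp * ε ≤ Cp * (R / Cp) := by gcongr
          _ = R := by field_simp }
  obtain ⟨w, hwa', hw⟩ := hpl.exists_eq_forall_mem_Icc_hasDerivWithinAt₀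
  have hwa : w a = L := hwa'
  -- positivity of `w` near `a`
  have hwcont : ContinuousWithinAt w (Icc tmin a) a :=
    (hw a ⟨htminlt.le, le_refl a⟩).continuousWithinAt
  have hwev : ∀ᶠ t in 𝓝[≤] a, 0 < w t := by
    rw [← nhdsWithin_Icc_eq_nhdsLE htminlt]
    exact hwcont.eventually (eventually_gt_nhds (by rw [hwa]; exact hLpos))
  obtain ⟨a'', ha''lt, ha''sub⟩ := mem_nhdsLE_iff_exists_Ioc_subset.mp hwev
  set a' := max tmin a'' with ha'def
  have ha'a : a' < a := max_lt htminlt ha''lt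
  have ha'0 : 0 ≤ a' := le_trans htminpos.le (le_max_left _ _)
  -- glue the two solutions
  set W : ℝ → ℝ := fun u => if u ≤ a then w u else z u with hWdef
  have hWa : W a = L := by rw [hWdef]; simp [hwa]
  have hWev : ∀ t ∈ Ioi a, W =ᶠ[𝓝 t] z := fun t ht => by
    filter_upwards [isOpen_Ioi.mem_nhds ht] with x hx using if_neg (not_le.2 hx)
  have hWdiff : ∀ t ∈ Ioo a u₁, HasDerivAt W (deriv z t) t := by
    intro t ht
    exact ((hz t (hsub1 ht)).differentiableAt.hasDerivAt).congr_of_eventuallyEq (hWev t ht.1)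
  have hWright : HasDerivWithinAt W d (Ici a) a := by
    apply hasDerivWithinAt_Ici_of_tendsto_deriv (s := Ioo a u₁)
    · exact fun t ht => ((hWdiff t ht).differentiableAt).differentiableWithinAt
    · show Tendsto W (𝓝[Ioo a u₁] a) (𝓝 (W a))
      rw [hWa, nhdsWithin_Ioo_eq_nhdsGT hau₁]
      apply tendsto_nhdsWithin_congr (f := z) ?_ (htendz.mono_left ?_)
      · intro x hx
        exact (if_neg (not_le.2 hx)).symm
      · exact le_refl _
    · exact Ioo_mem_nhdsGT_of_mem ⟨le_refl a, hau₁⟩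
    · apply htendd.congr'
      filter_upwards [Ioo_mem_nhdsGT_of_mem ⟨le_refl a, hau₁⟩] with t ht
        using ((hWev t ht.1).deriv_eq).symm
  have hwIic : HasDerivWithinAt w d (Iic a) a := by
    have h1 := hw a ⟨htminlt.le, le_refl a⟩
    rw [hwa] at h1
    exact h1.mono_of_mem_nhdsWithin (Icc_mem_nhdsLE_of_mem ⟨htminlt, le_refl a⟩)
  have hWleft : HasDerivWithinAt W d (Iic a) a :=
    hwIic.congr (fun t ht => if_pos ht) (if_pos le_rfl)
  have hWat : HasDerivAt W d a := by
    have := hWleft.union hWright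
    rw [Iic_union_Ici] at this
    exact this.hasDerivAt univ_mem
  -- contradiction with maximality
  apply hmax a' ha'0 ha'a
  refine ⟨W, ?_, fun u hu => if_neg (not_le.2 hu.1)⟩
  intro u hu
  rcases lt_trichotomy u a with hua | rfl | hau
  · have ha''u : a'' < u := lt_of_le_of_lt (le_max_right tmin a'') hu.1
    have hwu : 0 < w u := ha''sub ⟨ha''u, hua.le⟩
    have humem : u ∈ Ioo tmin a := ⟨lt_of_le_of_lt (le_max_left _ _) hu.1, hua⟩
    have hDw : HasDerivAt w (c * g u - f u - h u / w u ^ α) u :=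
      (hw u ⟨humem.1.le, hua.le⟩).hasDerivAt (Icc_mem_nhds humem.1 humem.2)
    have hWev' : W =ᶠ[𝓝 u] w := by
      filter_upwards [isOpen_Iio.mem_nhds hua] with x hx using if_pos hx.le
    have hWu : W u = w u := if_pos hua.le
    refine ⟨?_, by rw [hWu]; exact hwu⟩
    rw [hWu]
    exact hDw.congr_of_eventuallyEq hWev'
  · refine ⟨?_, by rw [hWa]; exact hLpos⟩
    rw [hWa]
    exact hWat
  · have hum : u ∈ Ioo a b := ⟨hau, hu.2⟩
    have hWu : W u = z u := if_neg (not_le.2 hau)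
    refine ⟨?_, by rw [hWu]; exact hzpos u hum⟩
    rw [hWu]
    exact (hz u hum).congr_of_eventuallyEq (hWev u hau)
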